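/- For all positive integers D, N, all V, W ∈ ℝ^{D×D}, and all Z ∈ ℝ^{D×(N+1)}: ‖V·Z·softmax(ZᵀWZ)‖_{2,col} ≤ ‖V‖₂·‖Z‖_{2,col}, where ‖V‖₂ is the spectral norm and softmax is applied column-wise. In particular, with ‖θ‖ = √(‖V‖_F² + ‖W‖_F²), the softmax self-attention encoder f(Z,θ) = VZ·softmax(ZᵀWZ) satisfies ‖f(Z,θ)‖_{2,col} ≤ ‖θ‖·‖Z‖_{2,col}. -/

import Mathlib

open Matrix

noncomputable section

/-- Column-wise softmax of a matrix. -/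
noncomputable def softmaxCol {n m : ℕ} (A : Matrix (Fin n) (Fin m) ℝ) :
    Matrix (Fin n) (Fin m) ℝ :=
  Matrix.of fun i j => Real.exp (A i j) / ∑ k, Real.exp (A k j)

/-- Maximum ℓ²-norm of a column. -/
noncomputable def colNormM {n m : ℕ} (Z : Matrix (Fin n) (Fin m) ℝ) : ℝ :=
  ⨆ j : Fin m, Real.sqrt (∑ i, Z i j ^ 2)

/-- Frobenius norm. -/
noncomputable def frobM {n m : ℕ} (Z : Matrix (Fin n) (Fin m) ℝ) : ℝ :=
  Real.sqrt (∑ i, ∑ j, Z i j ^ 2)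

/-- Spectral (ℓ² operator) norm of a matrix. -/
noncomputable def specNorm {n m : ℕ} (V : Matrix (Fin n) (Fin m) ℝ) : ℝ :=
  ‖LinearMap.toContinuousLinearMap (Matrix.toEuclideanLin V)‖

open Finset in
private lemma norm_euclid {n : ℕ} (v : EuclideanSpace ℝ (Fin n)) :
    ‖v‖ = Real.sqrt (∑ i, v i ^ 2) := by
  rw [EuclideanSpace.norm_eq]
  congr 1; apply Finset.sum_congr rfl; intro i _
  simp [Real.norm_eq_abs, sq_abs]

private lemma col_le_colNormM {n m : ℕ} (Z : Matrix (Fin n) (Fin m) ℝ) (j : Fin m) :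
    Real.sqrt (∑ i, Z i j ^ 2) ≤ colNormM Z := by
  exact le_ciSup (f := fun j => Real.sqrt (∑ i, Z i j ^ 2))
    (Set.Finite.bddAbove (Set.finite_range _)) j

private lemma colNormM_nonneg {n m : ℕ} [NeZero m] (Z : Matrix (Fin n) (Fin m) ℝ) :
    0 ≤ colNormM Z :=
  le_trans (Real.sqrt_nonneg _) (col_le_colNormM Z (Classical.arbitrary _))

private lemma clm_apply_eq {n m : ℕ} (V : Matrix (Fin n) (Fin m) ℝ) (x : EuclideanSpace ℝ (Fin m)) :
    ‖LinearMap.toContinuousLinearMap (Matrix.toEuclideanLin V) x‖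
      = Real.sqrt (∑ i, (V *ᵥ (fun j => x j)) i ^ 2) := by
  rw [norm_euclid]
  rfl

private lemma mulVec_sq_le {n m : ℕ} (V : Matrix (Fin n) (Fin m) ℝ) (x : Fin m → ℝ) :
    ∑ i, (V *ᵥ x) i ^ 2 ≤ (∑ i, ∑ j, V i j ^ 2) * ∑ j, x j ^ 2 := by
  rw [Finset.sum_mul]
  apply Finset.sum_le_sum
  intro i _
  have h := Finset.sum_mul_sq_le_sq_mul_sq Finset.univ (fun j => V i j) x
  simpa [Matrix.mulVec, dotProduct] using h

private lemma mulVec_norm_le {n m : ℕ} (V : Matrix (Fin n) (Fin m) ℝ) (x : Fin m → ℝ) :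
    Real.sqrt (∑ i, (V *ᵥ x) i ^ 2) ≤ specNorm V * Real.sqrt (∑ i, x i ^ 2) := by
  have h := (LinearMap.toContinuousLinearMap (Matrix.toEuclideanLin V)).le_opNorm
    ((WithLp.equiv 2 (Fin m → ℝ)).symm x)
  rw [clm_apply_eq, norm_euclid] at h
  convert h using 3 <;> rfl

private lemma specNorm_le_frobM {n m : ℕ} (V : Matrix (Fin n) (Fin m) ℝ) :
    specNorm V ≤ frobM V := by
  apply ContinuousLinearMap.opNorm_le_bound _ (Real.sqrt_nonneg _)
  intro x
  rw [clm_apply_eq, norm_euclid]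
  show _ ≤ Real.sqrt _ * _
  rw [← Real.sqrt_mul (by positivity)]
  exact Real.sqrt_le_sqrt (mulVec_sq_le V _)

private lemma convex_comb_norm_le {D M : ℕ} (v : Fin M → Fin D → ℝ) (w : Fin M → ℝ)
    (hw : ∀ k, 0 ≤ w k) (hs : ∑ k, w k = 1) (c : ℝ)
    (hc : ∀ k, Real.sqrt (∑ i, v k i ^ 2) ≤ c) :
    Real.sqrt (∑ i, (∑ k, w k * v k i) ^ 2) ≤ c := by
  set u : Fin M → EuclideanSpace ℝ (Fin D) :=
    fun k => (WithLp.equiv 2 (Fin D → ℝ)).symm (v k) with hu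
  have key : Real.sqrt (∑ i, (∑ k, w k * v k i) ^ 2) = ‖∑ k, w k • u k‖ := by
    rw [norm_euclid]
    congr 1
    apply Finset.sum_congr rfl
    intro i _
    congr 1
    have : (∑ k, w k • u k) i = ∑ k, (w k • u k) i := by
      rw [WithLp.ofLp_sum]; exact Finset.sum_apply i Finset.univ _
    rw [this]
    rfl
  rw [key]
  calc ‖∑ k, w k • u k‖ ≤ ∑ k, ‖w k • u k‖ := norm_sum_le _ _
    _ = ∑ k, w k * ‖u k‖ := by
        apply Finset.sum_congr rfl; intro k _
        rw [norm_smul, Real.norm_eq_abs, abs_of_nonneg (hw k)]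
    _ ≤ ∑ k, w k * c := by
        apply Finset.sum_le_sum; intro k _
        apply mul_le_mul_of_nonneg_left _ (hw k)
        rw [show ‖u k‖ = Real.sqrt (∑ i, v k i ^ 2) from norm_euclid _]
        exact hc k
    _ = c := by rw [← Finset.sum_mul, hs, one_mul]

/-- column-norm bound for the softmax self-attention encoder. -/
theorem stmt16 (D N : ℕ) (hD : 0 < D) (hN : 0 < N)
    (V W : Matrix (Fin D) (Fin D) ℝ) (Z : Matrix (Fin D) (Fin (N + 1)) ℝ) :
    colNormM (V * Z * softmaxCol (Zᵀ * W * Z)) ≤ specNorm V * colNormM Z ∧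
    colNormM (V * Z * softmaxCol (Zᵀ * W * Z)) ≤
      Real.sqrt (frobM V ^ 2 + frobM W ^ 2) * colNormM Z := by
  set S := softmaxCol (Zᵀ * W * Z) with hS
  have hpos : ∀ j, (0:ℝ) < ∑ k, Real.exp ((Zᵀ * W * Z) k j) :=
    fun j => Finset.sum_pos (fun k _ => Real.exp_pos _) Finset.univ_nonempty
  have hSnn : ∀ k j, 0 ≤ S k j := fun k j =>
    div_nonneg (Real.exp_pos _).le (hpos j).le
  have hSsum : ∀ j, ∑ k, S k j = 1 := by
    intro j
    simp only [hS, softmaxCol, Matrix.of_apply]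
    rw [← Finset.sum_div, div_self (hpos j).ne']
  have main : colNormM (V * Z * S) ≤ specNorm V * colNormM Z := by
    apply ciSup_le
    intro j
    have hcol : ∀ i, (V * Z * S) i j = (V *ᵥ (fun b => ∑ k, S k j * Z b k)) i := by
      intro i
      simp only [Matrix.mul_assoc, Matrix.mul_apply, Matrix.mulVec, dotProduct,
        Finset.mul_sum, Finset.sum_mul]
      rw [Finset.sum_comm]
      apply Finset.sum_congr rfl
      intro b _
      apply Finset.sum_congr rfl
      intro k _
      ring
    have h1 : Real.sqrt (∑ i, (V * Z * S) i j ^ 2)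
        = Real.sqrt (∑ i, (V *ᵥ (fun b => ∑ k, S k j * Z b k)) i ^ 2) := by
      congr 1; exact Finset.sum_congr rfl fun i _ => by rw [hcol i]
    rw [h1]
    calc Real.sqrt (∑ i, (V *ᵥ (fun b => ∑ k, S k j * Z b k)) i ^ 2)
        ≤ specNorm V * Real.sqrt (∑ i, (∑ k, S k j * Z i k) ^ 2) := mulVec_norm_le V _
      _ ≤ specNorm V * colNormM Z := by
          apply mul_le_mul_of_nonneg_left _ (norm_nonneg _)
          exact convex_comb_norm_le (fun k i => Z i k) (fun k => S k j)
            (fun k => hSnn k j) (hSsum j) _ (fun k => col_le_colNormM Z k)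
  refine ⟨main, le_trans main ?_⟩
  apply mul_le_mul_of_nonneg_right _ (colNormM_nonneg Z)
  calc specNorm V ≤ frobM V := specNorm_le_frobM V
    _ ≤ Real.sqrt (frobM V ^ 2 + frobM W ^ 2) := by
        rw [show frobM V = Real.sqrt (frobM V ^ 2) from
          (Real.sqrt_sq (Real.sqrt_nonneg _)).symm]
        exact Real.sqrt_le_sqrt (by simp [Real.sq_sqrt, le_add_of_nonneg_right, sq_nonneg])
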